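/- arXiv:2511.01319 — 2 statements merged into one kernel-verified Lean document; each statement's English description precedes it below -/
import Mathlib

section
/- For any positive integers m ≥ 3 and n ≥ 2, and any nonempty subset S_n of the last column I_n, N'(K_m×P_n; S_n) = Σ N'(K_m×P_n; S_n∪X), where the sum ranges over all nonempty subsets X of I_{n−1} with X∩S_{n−1} ≠ ∅, and S_{n−1} = {v_{i,n−1} : v_{i,n} ∈ S_n} is the set of vertices of I_{n−1} adjacent (in K_m×P_n) to vertices of S_n. -/
open SimpleGraph Finset
open scoped Classical

/-- A connected set of a graph: a nonempty vertex subset inducing a connected subgraph. -/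
def IsConnSet {V : Type*} (G : SimpleGraph V) (C : Finset V) : Prop :=
  C.Nonempty ∧ (G.induce (C : Set V)).Connected

/-- `N(G)`: the number of connected sets of `G`. -/
noncomputable def numConnSets {V : Type*} (G : SimpleGraph V) : ℕ :=
  {C : Finset V | IsConnSet G C}.ncard

/-- The cycle `C_m` on `Fin m`, labelled as in the paper: `i` is adjacent to `i'` iff
`|i − i'| = 1` or `{i, i'} = {first, last}` (0-indexed: `{0, m−1}`). -/
def cycleRow (m : ℕ) : SimpleGraph (Fin m) :=
  SimpleGraph.fromRel (fun i i' => i'.1 = i.1 + 1 ∨ (i.1 = 0 ∧ i'.1 = m - 1))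

/-- `C_{m,n}`: the connected sets of `K_m×P_n` containing at least one vertex of each
column. -/
def Cmn (m n : ℕ) : Set (Finset (Fin m × Fin n)) :=
  {C | IsConnSet ((⊤ : SimpleGraph (Fin m)) □ pathGraph n) C ∧
       ∀ j : Fin n, (C.filter (fun p => p.2 = j)).Nonempty}

/-- `C'_{m,n}`: the vertex subsets that are connected sets of `K_m×P_n` but not
connected sets of `C_m×P_n` and contain at least one vertex of each column. -/
def Cmn' (m n : ℕ) : Set (Finset (Fin m × Fin n)) :=
  {C | IsConnSet ((⊤ : SimpleGraph (Fin m)) □ pathGraph n) C ∧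
       ¬ IsConnSet (cycleRow m □ pathGraph n) C ∧
       ∀ j : Fin n, (C.filter (fun p => p.2 = j)).Nonempty}

/-- `N(K_m×P_n; X)`: the number of `C ∈ C_{m,n}` with `C∩I_j = X∩I_j` for every
column `I_j` with `X∩I_j ≠ ∅`. -/
noncomputable def Ncount (m n : ℕ) (X : Finset (Fin m × Fin n)) : ℕ :=
  {C | C ∈ Cmn m n ∧ ∀ j : Fin n,
      (X.filter (fun p => p.2 = j)).Nonempty →
      C.filter (fun p => p.2 = j) = X.filter (fun p => p.2 = j)}.ncard

/-- `N'(K_m×P_n; X)`: the number of `C ∈ C'_{m,n}` with `C∩I_j = X∩I_j` for every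
column `I_j` with `X∩I_j ≠ ∅`. -/
noncomputable def N' (m n : ℕ) (X : Finset (Fin m × Fin n)) : ℕ :=
  {C | C ∈ Cmn' m n ∧ ∀ j : Fin n,
      (X.filter (fun p => p.2 = j)).Nonempty →
      C.filter (fun p => p.2 = j) = X.filter (fun p => p.2 = j)}.ncard

/-- `f_{m,n}^i`: the number of sets in `C_{m,n}` whose intersection with the last column
equals the fixed `i`-element set `{v_{1,n},…,v_{i,n}}`. -/
noncomputable def fval (m n : ℕ) (hn : 0 < n) (i : ℕ) : ℕ :=
  {C : Finset (Fin m × Fin n) | C ∈ Cmn m n ∧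
    C.filter (fun p => p.2 = (⟨n - 1, by omega⟩ : Fin n)) =
      (Finset.univ.filter (fun q : Fin m => q.1 < i)).image
        (fun q => (q, (⟨n - 1, by omega⟩ : Fin n)))}.ncard

/-- `R` is (the vertex set of) a connected component of the subgraph of `H` induced by
`S`: `R` is a nonempty subset of `S`, `H[R]` is connected, and there is no edge of `H`
between `R` and `S \ R`. -/
def IsCompOf {W : Type*} (H : SimpleGraph W) (R S : Finset W) : Prop :=
  R ⊆ S ∧ R.Nonempty ∧ (H.induce (R : Set W)).Connected ∧
  ∀ x ∈ R, ∀ y ∈ S, y ∉ R → ¬ H.Adj x y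

/-- `k(H[S])`: the number of connected components of the subgraph of `H` induced by `S`. -/
noncomputable def kcomp {W : Type*} (H : SimpleGraph W) (S : Finset W) : ℕ :=
  Nat.card (H.induce (S : Set W)).ConnectedComponent

lemma filter_image_col {m n : ℕ} (S : Finset (Fin m)) (j j' : Fin n) :
    (S.image (fun q => (q, j))).filter (fun p => p.2 = j') =
      if j = j' then S.image (fun q => (q, j)) else ∅ := by
  by_cases h : j = j'
  · subst h; simp [Finset.filter_eq_self]
  · simp [h, Finset.filter_eq_empty_iff]

lemma col_eq_image {m n : ℕ} (C : Finset (Fin m × Fin n)) (j : Fin n) :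
    C.filter (fun p => p.2 = j) =
      ((C.filter (fun p => p.2 = j)).image Prod.fst).image (fun q => (q, j)) := by
  ext p
  simp only [Finset.mem_image, Finset.mem_filter]
  constructor
  · rintro ⟨hc, hj⟩
    exact ⟨p.1, ⟨p, ⟨hc, hj⟩, rfl⟩, by rw [← hj]⟩
  · rintro ⟨q, ⟨r, ⟨hr, hrj⟩, hq⟩, hp⟩
    have : r = p := by rw [← hp, ← hq, ← hrj]
    rw [← this]; exact ⟨hr, hrj⟩

lemma walk_cross {m n : ℕ} (hn : 2 ≤ n) (C : Finset (Fin m × Fin n)) :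
    ∀ {a b : (C : Set (Fin m × Fin n))}
      (_ : (((⊤ : SimpleGraph (Fin m)) □ pathGraph n).induce
        (C : Set (Fin m × Fin n))).Walk a b),
      (a : Fin m × Fin n).2 = (⟨n - 1, by omega⟩ : Fin n) →
      (b : Fin m × Fin n).2 ≠ (⟨n - 1, by omega⟩ : Fin n) →
      ∃ i : Fin m, (i, (⟨n - 1, by omega⟩ : Fin n)) ∈ C ∧
        (i, (⟨n - 2, by omega⟩ : Fin n)) ∈ C := by
  intro a b w
  induction w with
  | nil => intro h1 h2; exact absurd h1 h2
  | @cons a c b h p ih =>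
    intro ha hb
    by_cases hc : (c : Fin m × Fin n).2 = (⟨n - 1, by omega⟩ : Fin n)
    · exact ih hc hb
    · have h' : ((⊤ : SimpleGraph (Fin m)) □ pathGraph n).Adj
          (a : Fin m × Fin n) (c : Fin m × Fin n) := h
      rw [boxProd_adj] at h'
      rcases h' with ⟨_, h2⟩ | ⟨h1, h2⟩
      · exact absurd (h2 ▸ ha) hc
      · rw [pathGraph_adj] at h1
        have hav : ((a : Fin m × Fin n).2 : ℕ) = n - 1 := by rw [ha]
        have hclt : ((c : Fin m × Fin n).2 : ℕ) < n := (c : Fin m × Fin n).2.isLt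
        have hcne : ((c : Fin m × Fin n).2 : ℕ) ≠ n - 1 := fun hcv => hc (Fin.ext hcv)
        have hcv : ((c : Fin m × Fin n).2 : ℕ) = n - 2 := by omega
        refine ⟨(a : Fin m × Fin n).1, ?_, ?_⟩
        · have : ((a : Fin m × Fin n).1, (⟨n - 1, by omega⟩ : Fin n)) =
            (a : Fin m × Fin n) := by rw [← ha]
          rw [this]; exact a.2
        · have : ((a : Fin m × Fin n).1, (⟨n - 2, by omega⟩ : Fin n)) =
            (c : Fin m × Fin n) := by
            rw [h2]; exact Prod.ext rfl (Fin.ext hcv.symm)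
          rw [this]; exact c.2


lemma N'_eq_card {m n : ℕ} (Y : Finset (Fin m × Fin n)) :
    N' m n Y = (Finset.univ.filter (fun C : Finset (Fin m × Fin n) =>
      C ∈ Cmn' m n ∧ ∀ j : Fin n, (Y.filter (fun p => p.2 = j)).Nonempty →
        C.filter (fun p => p.2 = j) = Y.filter (fun p => p.2 = j))).card := by
  rw [N', ← Set.ncard_coe_finset]
  congr 1
  ext C
  simp

lemma cond_iff {m n : ℕ} (S : Finset (Fin m)) (hS : S.Nonempty) (j1 : Fin n)
    (C : Finset (Fin m × Fin n)) :
    (∀ j : Fin n, ((S.image (fun q => (q, j1))).filter (fun p => p.2 = j)).Nonempty →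
      C.filter (fun p => p.2 = j) = (S.image (fun q => (q, j1))).filter (fun p => p.2 = j))
    ↔ C.filter (fun p => p.2 = j1) = S.image (fun q => (q, j1)) := by
  constructor
  · intro h
    have := h j1 (by rw [filter_image_col, if_pos rfl]; exact hS.image _)
    rwa [filter_image_col, if_pos rfl] at this
  · intro h j hj
    rw [filter_image_col] at hj ⊢
    by_cases hjj : j1 = j
    · subst hjj; rw [if_pos rfl]; exact h
    · rw [if_neg hjj] at hj; exact absurd hj (by simp)

lemma cond_union_iff {m n : ℕ} (S X : Finset (Fin m)) (j1 j2 : Fin n) (hj : j1 ≠ j2)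
    (C : Finset (Fin m × Fin n)) :
    (∀ j : Fin n, (((S.image (fun q => (q, j1)) ∪ X.image (fun q => (q, j2)))).filter
        (fun p => p.2 = j)).Nonempty →
      C.filter (fun p => p.2 = j) =
        (S.image (fun q => (q, j1)) ∪ X.image (fun q => (q, j2))).filter (fun p => p.2 = j))
    ↔ ((S.Nonempty → C.filter (fun p => p.2 = j1) = S.image (fun q => (q, j1))) ∧
       (X.Nonempty → C.filter (fun p => p.2 = j2) = X.image (fun q => (q, j2)))) := by
  have hfil : ∀ j : Fin n,
      (S.image (fun q => (q, j1)) ∪ X.image (fun q => (q, j2))).filter (fun p => p.2 = j) =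
      (if j1 = j then S.image (fun q => (q, j1)) else ∅) ∪
      (if j2 = j then X.image (fun q => (q, j2)) else ∅) := by
    intro j; rw [Finset.filter_union, filter_image_col, filter_image_col]
  constructor
  · intro h
    constructor
    · intro hS
      have hne : (S.image (fun q => (q, j1)) ∪ (∅ : Finset (Fin m × Fin n))).Nonempty := by
        rw [Finset.union_empty]; exact hS.image _
      have := h j1 (by rw [hfil, if_pos rfl, if_neg (fun e => hj e.symm)]; exact hne)
      rwa [hfil, if_pos rfl, if_neg (fun e => hj e.symm), Finset.union_empty] at this
    · intro hX
      have hne2 : ((∅ : Finset (Fin m × Fin n)) ∪ X.image (fun q => (q, j2))).Nonempty := by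
        rw [Finset.empty_union]; exact hX.image _
      have := h j2 (by rw [hfil, if_neg hj, if_pos rfl]; exact hne2)
      rwa [hfil, if_neg hj, if_pos rfl, Finset.empty_union] at this
  · rintro ⟨h1, h2⟩ j hjne
    rw [hfil] at hjne ⊢
    by_cases e1 : j1 = j
    · subst e1
      rw [if_pos rfl, if_neg (fun e => hj e.symm), Finset.union_empty] at hjne ⊢
      rcases S.eq_empty_or_nonempty with rfl | hS
      · simp at hjne
      · exact h1 hS
    · by_cases e2 : j2 = j
      · subst e2
        rw [if_neg e1, if_pos rfl, Finset.empty_union] at hjne ⊢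
        rcases X.eq_empty_or_nonempty with rfl | hX
        · simp at hjne
        · exact h2 hX
      · rw [if_neg e1, if_neg e2] at hjne; simp at hjne


/-- For `m ≥ 3`, `n ≥ 2` and any nonempty subset `S_n` of the last
column `I_n`, `N'(K_m×P_n; S_n) = Σ N'(K_m×P_n; S_n∪X)`, the sum over all nonempty
subsets `X` of `I_{n−1}` with `X∩S_{n−1} ≠ ∅`, where `S_{n−1}` consists of the vertices
of `I_{n−1}` below the vertices of `S_n`. -/
theorem statement11 (m n : ℕ) (hm : 3 ≤ m) (hn : 2 ≤ n)
    (S : Finset (Fin m)) (hS : S.Nonempty) :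
    N' m n (S.image (fun q => (q, (⟨n - 1, by omega⟩ : Fin n)))) =
      ∑ X ∈ (Finset.univ : Finset (Finset (Fin m))).filter
          (fun X => X.Nonempty ∧ (X ∩ S).Nonempty),
        N' m n (S.image (fun q => (q, (⟨n - 1, by omega⟩ : Fin n))) ∪
          X.image (fun q => (q, (⟨n - 2, by omega⟩ : Fin n)))) := by
  classical
  have hj12 : (⟨n - 1, by omega⟩ : Fin n) ≠ (⟨n - 2, by omega⟩ : Fin n) := by
    simp [Fin.ext_iff]; omega
  rw [N'_eq_card]
  have e1 : (Finset.univ.filter (fun C : Finset (Fin m × Fin n) =>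
      C ∈ Cmn' m n ∧ ∀ j : Fin n,
        ((S.image (fun q => (q, (⟨n - 1, by omega⟩ : Fin n)))).filter
          (fun p => p.2 = j)).Nonempty →
        C.filter (fun p => p.2 = j) =
          (S.image (fun q => (q, (⟨n - 1, by omega⟩ : Fin n)))).filter (fun p => p.2 = j)))
      = Finset.univ.filter (fun C : Finset (Fin m × Fin n) => C ∈ Cmn' m n ∧
          C.filter (fun p => p.2 = (⟨n - 1, by omega⟩ : Fin n)) =
            S.image (fun q => (q, (⟨n - 1, by omega⟩ : Fin n)))) := by
    apply Finset.filter_congr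
    intro C _
    exact and_congr_right fun _ => cond_iff S hS _ C
  rw [e1]
  rw [Finset.card_eq_sum_card_fiberwise
    (f := fun C : Finset (Fin m × Fin n) =>
      (C.filter (fun p => p.2 = (⟨n - 2, by omega⟩ : Fin n))).image Prod.fst)
    (t := (Finset.univ : Finset (Finset (Fin m))).filter
      (fun X => X.Nonempty ∧ (X ∩ S).Nonempty))]
  · apply Finset.sum_congr rfl
    intro X hX
    simp only [Finset.mem_filter, Finset.mem_univ, true_and] at hX
    obtain ⟨hXne, hXS⟩ := hX
    rw [N'_eq_card]
    congr 1
    ext C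
    simp only [Finset.mem_filter, Finset.mem_univ, true_and,
      cond_union_iff S X _ _ hj12 C]
    constructor
    · rintro ⟨⟨hC, hf1⟩, hfib⟩
      refine ⟨hC, fun _ => hf1, fun _ => ?_⟩
      rw [col_eq_image C (⟨n - 2, by omega⟩ : Fin n), hfib]
    · rintro ⟨hC, hf1, hf2⟩
      refine ⟨⟨hC, hf1 hS⟩, ?_⟩
      have hid : (Prod.fst ∘ fun q : Fin m => (q, (⟨n - 2, by omega⟩ : Fin n))) = id := rfl
      rw [hf2 hXne, Finset.image_image, hid, Finset.image_id]
  · intro C hC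
    simp only [Finset.mem_coe, Finset.mem_filter, Finset.mem_univ, true_and] at hC ⊢
    obtain ⟨hC, hf1⟩ := hC
    obtain ⟨hconn, -, hcols⟩ := hC
    obtain ⟨-, hconn⟩ := hconn
    constructor
    · exact (hcols _).image _
    · -- find i ∈ (f C) ∩ S
      obtain ⟨s0, hs0⟩ := hS
      have hu : ((s0, (⟨n - 1, by omega⟩ : Fin n)) : Fin m × Fin n) ∈ C := by
        have : ((s0, (⟨n - 1, by omega⟩ : Fin n)) : Fin m × Fin n) ∈
            C.filter (fun p => p.2 = (⟨n - 1, by omega⟩ : Fin n)) := by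
          rw [hf1]; exact Finset.mem_image_of_mem _ hs0
        exact (Finset.mem_filter.mp this).1
      obtain ⟨v, hv⟩ := hcols (⟨0, by omega⟩ : Fin n)
      rw [Finset.mem_filter] at hv
      obtain ⟨hvC, hvj⟩ := hv
      have hvne : v.2 ≠ (⟨n - 1, by omega⟩ : Fin n) := by
        rw [hvj]; simp [Fin.ext_iff]; omega
      obtain ⟨w⟩ := hconn.preconnected ⟨(s0, (⟨n - 1, by omega⟩ : Fin n)), hu⟩ ⟨v, hvC⟩
      obtain ⟨i, hi1, hi2⟩ := walk_cross hn C w rfl hvne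
      refine ⟨i, Finset.mem_inter.mpr ⟨?_, ?_⟩⟩
      · refine Finset.mem_image.mpr ⟨(i, (⟨n - 2, by omega⟩ : Fin n)), ?_, rfl⟩
        exact Finset.mem_filter.mpr ⟨hi2, rfl⟩
      · have : ((i, (⟨n - 1, by omega⟩ : Fin n)) : Fin m × Fin n) ∈
            S.image (fun q => (q, (⟨n - 1, by omega⟩ : Fin n))) := by
          rw [← hf1]; exact Finset.mem_filter.mpr ⟨hi1, rfl⟩
        obtain ⟨q, hq, hqe⟩ := Finset.mem_image.mp this
        have : q = i := (Prod.mk.injEq _ _ _ _ ▸ hqe).1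
        rwa [← this]
end

section
/- Let m ≥ 3, n ≥ 3, and suppose some C ∈ C'_{m,n} satisfies C∩I_n = S_n and C∩I_{n−1} = T_{n−1}. If no connected component of the subgraph of C_m×P_n induced by S_n is a connected component of the subgraph of C_m×P_n induced by S_n∪T_{n−1}, and the subgraph of C_m×P_n induced by S_n∪T_{n−1} has the same number of connected components as the subgraph induced by T_{n−1}, then N'(K_m×P_n; S_n∪T_{n−1}) = N'(K_m×P_{n−1}; T_{n−1}). -/
open SimpleGraph Finset
open scoped Classical

section Aux
variable {V : Type*} (G : SimpleGraph V)

def incHom {A B : Set V} (h : A ⊆ B) : G.induce A →g G.induce B :=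
  ⟨Set.inclusion h, fun hab => hab⟩

lemma reach_mono {A B : Set V} (h : A ⊆ B) {x y : V} (hx : x ∈ A) (hy : y ∈ A)
    (hr : (G.induce A).Reachable ⟨x, hx⟩ ⟨y, hy⟩) :
    (G.induce B).Reachable ⟨x, h hx⟩ ⟨y, h hy⟩ :=
  hr.map (incHom G h)

lemma walk_subset {A R : Set V} {x y : A} (p : (G.induce A).Walk x y)
    (hsup : ∀ z ∈ p.support, (z : V) ∈ R) :
    (G.induce R).Reachable ⟨x, hsup x p.start_mem_support⟩ ⟨y, hsup y p.end_mem_support⟩ := by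
  induction p with
  | nil => exact Reachable.refl _
  | @cons a z b h q ih =>
    have hz : (z : V) ∈ R := hsup z (by simp [SimpleGraph.Walk.support_cons])
    have ha : (a : V) ∈ R := hsup a (by simp [SimpleGraph.Walk.support_cons])
    have hadj : (G.induce R).Adj ⟨a, ha⟩ ⟨z, hz⟩ := h
    exact hadj.reachable.trans (ih (fun w hw => hsup w (by
      rw [SimpleGraph.Walk.support_cons]; exact List.mem_cons_of_mem _ hw)))

variable [DecidableEq V]

noncomputable def compSet (A : Finset V) (v : V) : Finset V :=
  A.filter (fun w => ∃ (hv : v ∈ A) (hw : w ∈ A),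
    (G.induce (A : Set V)).Reachable ⟨v, hv⟩ ⟨w, hw⟩)

lemma mem_compSet {A : Finset V} {v : V} (hv : v ∈ A) {w : V} :
    w ∈ compSet G A v ↔ ∃ hw : w ∈ A,
      (G.induce (A : Set V)).Reachable ⟨v, hv⟩ ⟨w, hw⟩ := by
  simp only [compSet, mem_filter]
  constructor
  · rintro ⟨hw, _, hw', hr⟩; exact ⟨hw, hr⟩
  · rintro ⟨hw, hr⟩; exact ⟨hw, hv, hw, hr⟩

lemma compSet_isCompOf {A : Finset V} {v : V} (hv : v ∈ A) :
    IsCompOf G (compSet G A v) A := by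
  have hsub : compSet G A v ⊆ A := filter_subset _ _
  have hself : v ∈ compSet G A v := (mem_compSet G hv).2 ⟨hv, Reachable.refl _⟩
  refine ⟨hsub, ⟨v, hself⟩, ?_, ?_⟩
  · haveI : Nonempty ((compSet G A v : Set V)) := ⟨⟨v, hself⟩⟩
    refine ⟨?_⟩
    · -- preconnected
      rintro ⟨x, hx⟩ ⟨y, hy⟩
      have hx' := hx; have hy' := hy
      rw [Finset.mem_coe, mem_compSet G hv] at hx' hy'
      obtain ⟨hxA, hrx⟩ := hx'
      obtain ⟨hyA, hry⟩ := hy'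
      obtain ⟨px⟩ := hrx
      obtain ⟨py⟩ := hry
      have hsup : ∀ z ∈ (px.reverse.append py).support, (z : V) ∈ (compSet G A v : Set V) := by
        intro z hz
        rw [SimpleGraph.Walk.mem_support_append_iff] at hz
        have hrz : (G.induce (A : Set V)).Reachable ⟨v, hv⟩ z := by
          rcases hz with hz | hz
          · rw [SimpleGraph.Walk.support_reverse, List.mem_reverse] at hz
            exact ⟨px.takeUntil z hz⟩
          · exact ⟨py.takeUntil z hz⟩
        exact (mem_compSet G hv).2 ⟨z.2, hrz⟩
      have := walk_subset G (px.reverse.append py) hsup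
      exact this
  · rintro x hx y hyA hy hadj
    rw [mem_compSet G hv] at hx
    obtain ⟨hxA, hrx⟩ := hx
    have : (G.induce (A : Set V)).Adj ⟨x, hxA⟩ ⟨y, hyA⟩ := hadj
    exact hy ((mem_compSet G hv).2 ⟨hyA, hrx.trans this.reachable⟩)

lemma reach_le {V : Type*} {G H : SimpleGraph V} (hle : G ≤ H) {s : Set V} {x y : s}
    (h : (G.induce s).Reachable x y) : (H.induce s).Reachable x y :=
  h.map (⟨id, fun {a b} hab => hle hab⟩ : G.induce s →g H.induce s)

end Aux

section ColAdj
variable {m n : ℕ}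

lemma vert_adj (H : SimpleGraph (Fin m)) {i : Fin m} {j j' : Fin n}
    (h : (pathGraph n).Adj j j') : (H □ pathGraph n).Adj (i, j) (i, j') := by
  rw [boxProd_adj]; exact Or.inr ⟨h, rfl⟩

lemma path_adj_last_prev (hn : 3 ≤ n) :
    (pathGraph n).Adj ⟨n - 1, by omega⟩ ⟨n - 2, by omega⟩ := by
  rw [pathGraph_adj]; right; simp; omega

lemma adj_last_cases {H : SimpleGraph (Fin m)} (hn : 3 ≤ n) {x y : Fin m × Fin n}
    (hx : x.2 = (⟨n - 1, by omega⟩ : Fin n)) (hy : y.2 ≠ (⟨n - 1, by omega⟩ : Fin n))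
    (h : (H □ pathGraph n).Adj x y) : y = (x.1, (⟨n - 2, by omega⟩ : Fin n)) := by
  rw [boxProd_adj] at h
  rcases h with ⟨_, h2⟩ | ⟨h1, h2⟩
  · exact absurd (h2 ▸ hx) hy
  · rw [pathGraph_adj] at h1
    have : (y.2 : ℕ) = n - 2 := by
      rcases h1 with h1 | h1 <;> rw [hx] at h1 <;> simp at h1 <;> omega
    exact Prod.ext h2.symm (Fin.ext this)

lemma K_adj_of_same_col {x y : Fin m × Fin n} (hxy : x ≠ y) (h2 : x.2 = y.2) :
    ((⊤ : SimpleGraph (Fin m)) □ pathGraph n).Adj x y := by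
  rw [boxProd_adj]
  refine Or.inl ⟨?_, h2⟩
  simp only [top_adj]
  intro h1
  exact hxy (Prod.ext h1 h2)

end ColAdj

section Cast
variable {m n : ℕ}

def colEmb (m n : ℕ) : Fin m × Fin (n - 1) ↪ Fin m × Fin n :=
  ⟨fun p => (p.1, Fin.castLE (Nat.sub_le n 1) p.2), by
    intro p q h
    simp only [Prod.mk.injEq] at h
    exact Prod.ext h.1 (Fin.castLE_injective _ h.2)⟩

lemma colEmb_snd (p : Fin m × Fin (n - 1)) : ((colEmb m n p).2 : ℕ) = (p.2 : ℕ) := rfl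

lemma adj_cast (H : SimpleGraph (Fin m)) {x y : Fin m × Fin (n - 1)} :
    (H □ pathGraph (n - 1)).Adj x y ↔ (H □ pathGraph n).Adj (colEmb m n x) (colEmb m n y) := by
  simp only [boxProd_adj, pathGraph_adj, colEmb, Function.Embedding.coeFn_mk,
    Fin.ext_iff, Fin.coe_castLE, Prod.mk.injEq]
  exact Iff.rfl

lemma mem_map_snd_lt {B : Finset (Fin m × Fin (n - 1))} {y : Fin m × Fin n}
    (hy : y ∈ B.map (colEmb m n)) : (y.2 : ℕ) < n - 1 := by
  obtain ⟨x, hx, rfl⟩ := Finset.mem_map.1 hy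
  exact x.2.2

lemma mem_map_pre {B : Finset (Fin m × Fin (n - 1))} {y : Fin m × Fin n}
    (hy : y ∈ B.map (colEmb m n)) :
    (y.1, (⟨(y.2 : ℕ), mem_map_snd_lt hy⟩ : Fin (n - 1))) ∈ B := by
  obtain ⟨x, hx, rfl⟩ := Finset.mem_map.1 hy
  have : ((colEmb m n x).1, (⟨((colEmb m n x).2 : ℕ), _⟩ : Fin (n - 1))) = x :=
    Prod.ext rfl (Fin.ext rfl)
  rwa [this]

noncomputable def castIso (H : SimpleGraph (Fin m)) (B : Finset (Fin m × Fin (n - 1))) :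
    (H □ pathGraph (n - 1)).induce (B : Set (Fin m × Fin (n - 1))) ≃g
    (H □ pathGraph n).induce ((B.map (colEmb m n) : Finset (Fin m × Fin n)) : Set _) where
  toFun x := ⟨colEmb m n x.1, Finset.mem_coe.mpr (Finset.mem_map_of_mem _ x.2)⟩
  invFun y := ⟨(y.1.1, ⟨(y.1.2 : ℕ), mem_map_snd_lt y.2⟩), Finset.mem_coe.mpr (mem_map_pre y.2)⟩
  left_inv x := Subtype.ext (Prod.ext rfl (Fin.ext rfl))
  right_inv y := Subtype.ext (Prod.ext rfl (Fin.ext rfl))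
  map_rel_iff' := by
    intro x y
    exact (adj_cast H).symm

lemma conn_cast (H : SimpleGraph (Fin m)) (B : Finset (Fin m × Fin (n - 1))) :
    ((H □ pathGraph (n - 1)).induce (B : Set (Fin m × Fin (n - 1)))).Connected ↔
    ((H □ pathGraph n).induce
      ((B.map (colEmb m n) : Finset (Fin m × Fin n)) : Set _)).Connected :=
  (castIso H B).connected_iff


lemma filter_map_col {B : Finset (Fin m × Fin (n - 1))} (j : Fin n) (hj : (j : ℕ) < n - 1) :
    (B.map (colEmb m n)).filter (fun p => p.2 = j) =
    (B.filter (fun q => q.2 = (⟨(j : ℕ), hj⟩ : Fin (n - 1)))).map (colEmb m n) := by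
  ext p
  simp only [Finset.mem_filter, Finset.mem_map]
  constructor
  · rintro ⟨⟨x, hx, rfl⟩, h2⟩
    refine ⟨x, ⟨hx, ?_⟩, rfl⟩
    have : ((colEmb m n x).2 : ℕ) = (j : ℕ) := by rw [h2]
    exact Fin.ext this
  · rintro ⟨x, ⟨hx, h2⟩, rfl⟩
    refine ⟨⟨x, hx, rfl⟩, ?_⟩
    have : ((colEmb m n x).2 : ℕ) = (j : ℕ) := by rw [colEmb_snd, h2]
    exact Fin.ext this

lemma filter_map_last {B : Finset (Fin m × Fin (n - 1))} (hn : 3 ≤ n) :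
    (B.map (colEmb m n)).filter (fun p => p.2 = (⟨n - 1, by omega⟩ : Fin n)) = ∅ := by
  rw [Finset.filter_eq_empty_iff]
  rintro p hp
  obtain ⟨x, hx, rfl⟩ := Finset.mem_map.1 hp
  intro h
  have : ((colEmb m n x).2 : ℕ) = n - 1 := by rw [h]
  rw [colEmb_snd] at this
  have := x.2.2
  omega

lemma image_col_eq {T : Finset (Fin m × Fin n)} {c : Fin n} (hT : ∀ p ∈ T, p.2 = c) :
    (T.image Prod.fst).image (fun q => (q, c)) = T := by
  ext p
  simp only [Finset.mem_image, exists_exists_and_eq_and]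
  constructor
  · rintro ⟨t, ht, rfl⟩
    have : (t.1, c) = t := Prod.ext rfl (hT t ht).symm
    rwa [this]
  · intro hp
    exact ⟨p, hp, Prod.ext rfl (hT p hp).symm⟩

end Cast

section ST
variable {m n : ℕ}

/-- Every vertex of `Sn` reaches, within `Sn`, a vertex whose vertical neighbour is in `Tn1`. -/
lemma exists_anchor (hn : 3 ≤ n) (Sn Tn1 : Finset (Fin m × Fin n))
    (hScol : ∀ p ∈ Sn, p.2 = (⟨n - 1, by omega⟩ : Fin n))
    (hTcol : ∀ p ∈ Tn1, p.2 = (⟨n - 2, by omega⟩ : Fin n))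
    (hcomp : ∀ R, IsCompOf (cycleRow m □ pathGraph n) R Sn →
      ¬ IsCompOf (cycleRow m □ pathGraph n) R (Sn ∪ Tn1))
    {s : Fin m × Fin n} (hs : s ∈ Sn) :
    ∃ (i : Fin m) (hi : (i, (⟨n - 1, by omega⟩ : Fin n)) ∈ Sn),
      ((cycleRow m □ pathGraph n).induce (Sn : Set _)).Reachable ⟨s, hs⟩
        ⟨(i, ⟨n - 1, by omega⟩), hi⟩ ∧ (i, (⟨n - 2, by omega⟩ : Fin n)) ∈ Tn1 := by
  set Cy := cycleRow m □ pathGraph n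
  have hR := compSet_isCompOf Cy hs
  have h2 := hcomp _ hR
  rw [IsCompOf] at h2
  push_neg at h2
  obtain ⟨x, hx, y, hy, hyR, hadj⟩ :=
    h2 (hR.1.trans subset_union_left) hR.2.1 hR.2.2.1
  have hxS : x ∈ Sn := hR.1 hx
  rw [Finset.mem_union] at hy
  rcases hy with hyS | hyT
  · exact absurd hadj (hR.2.2.2 x hx y hyS hyR)
  · have hy2 : y.2 = (⟨n - 2, by omega⟩ : Fin n) := hTcol y hyT
    have hx2 : x.2 = (⟨n - 1, by omega⟩ : Fin n) := hScol x hxS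
    have hy' : y = (x.1, (⟨n - 2, by omega⟩ : Fin n)) := by
      refine adj_last_cases hn hx2 ?_ hadj
      rw [hy2]; intro h; have := Fin.mk.injEq (n-2) _ (n-1) _ ▸ h; simp [Fin.ext_iff] at h; omega
    refine ⟨x.1, ?_, ?_, ?_⟩
    · have : x = (x.1, (⟨n - 1, by omega⟩ : Fin n)) := Prod.ext rfl hx2
      rwa [← this]
    · have he : x = (x.1, (⟨n - 1, by omega⟩ : Fin n)) := Prod.ext rfl hx2
      have hxm := hx
      rw [mem_compSet Cy hs] at hxm
      obtain ⟨hxA, hr⟩ := hxm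
      have h3 : (⟨x, hxA⟩ : (Sn : Set (Fin m × Fin n))) =
          ⟨(x.1, ⟨n - 1, by omega⟩), he ▸ hxA⟩ := Subtype.ext he
      rw [← h3]; exact hr
    · rwa [← hy']

lemma t_reach (hn : 3 ≤ n) (Sn Tn1 : Finset (Fin m × Fin n))
    (hScol : ∀ p ∈ Sn, p.2 = (⟨n - 1, by omega⟩ : Fin n))
    (hTcol : ∀ p ∈ Tn1, p.2 = (⟨n - 2, by omega⟩ : Fin n))
    (hcomp : ∀ R, IsCompOf (cycleRow m □ pathGraph n) R Sn →
      ¬ IsCompOf (cycleRow m □ pathGraph n) R (Sn ∪ Tn1))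
    (hk : kcomp (cycleRow m □ pathGraph n) (Sn ∪ Tn1) =
      kcomp (cycleRow m □ pathGraph n) Tn1)
    {t1 t2 : Fin m × Fin n} (ht1 : t1 ∈ Tn1) (ht2 : t2 ∈ Tn1)
    (hr : ((cycleRow m □ pathGraph n).induce ((Sn ∪ Tn1 : Finset _) : Set _)).Reachable
      ⟨t1, by simp [ht1]⟩ ⟨t2, by simp [ht2]⟩) :
    ((cycleRow m □ pathGraph n).induce (Tn1 : Set _)).Reachable ⟨t1, ht1⟩ ⟨t2, ht2⟩ := by
  set Cy := cycleRow m □ pathGraph n with hCy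
  have hsub : (Tn1 : Set (Fin m × Fin n)) ⊆ ((Sn ∪ Tn1 : Finset _) : Set _) := by
    intro z hz; simp only [Finset.coe_union, Set.mem_union]; exact Or.inr hz
  set φ : (Cy.induce (Tn1 : Set _)).ConnectedComponent →
      (Cy.induce ((Sn ∪ Tn1 : Finset _) : Set _)).ConnectedComponent :=
    ConnectedComponent.map (incHom Cy hsub) with hφ
  haveI : Finite ((Cy.induce (Tn1 : Set (Fin m × Fin n)))).ConnectedComponent := by
    unfold SimpleGraph.ConnectedComponent; infer_instance
  have hsurj : Function.Surjective φ := by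
    refine ConnectedComponent.ind ?_
    rintro ⟨v, hv⟩
    have hv' := hv
    rw [Finset.coe_union, Set.mem_union] at hv'
    rcases hv' with hvS | hvT
    · obtain ⟨i, hi, hreach, hiT⟩ := exists_anchor hn Sn Tn1 hScol hTcol hcomp hvS
      refine ⟨(Cy.induce (Tn1 : Set _)).connectedComponentMk ⟨(i, ⟨n - 2, by omega⟩), hiT⟩, ?_⟩
      rw [hφ, ConnectedComponent.map_mk]
      refine ConnectedComponent.sound ?_
      have hSsub : (Sn : Set (Fin m × Fin n)) ⊆ ((Sn ∪ Tn1 : Finset _) : Set _) := by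
        intro z hz; simp only [Finset.coe_union, Set.mem_union]; exact Or.inl hz
      have h1 := reach_mono Cy hSsub hvS hi hreach
      have hadj : (Cy.induce ((Sn ∪ Tn1 : Finset _) : Set _)).Adj
          ⟨(i, ⟨n - 2, by omega⟩), hsub hiT⟩ ⟨(i, ⟨n - 1, by omega⟩), hSsub hi⟩ := by
        show Cy.Adj _ _
        rw [hCy]
        exact (vert_adj (cycleRow m) (path_adj_last_prev hn)).symm
      exact hadj.reachable.trans h1.symm
    · refine ⟨(Cy.induce (Tn1 : Set _)).connectedComponentMk ⟨v, hvT⟩, ?_⟩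
      rw [hφ, ConnectedComponent.map_mk]
      rfl
  have hbij : Function.Bijective φ :=
    (Nat.bijective_iff_surjective_and_card φ).2 ⟨hsurj, hk.symm⟩
  have key : φ ((Cy.induce (Tn1 : Set _)).connectedComponentMk ⟨t1, ht1⟩) =
      φ ((Cy.induce (Tn1 : Set _)).connectedComponentMk ⟨t2, ht2⟩) := by
    rw [hφ, ConnectedComponent.map_mk, ConnectedComponent.map_mk]
    exact ConnectedComponent.sound hr
  have := hbij.1 key
  exact (SimpleGraph.ConnectedComponent.eq).1 this


lemma claimK (hn : 3 ≤ n) (A Sn Tn1 : Finset (Fin m × Fin n))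
    (hA : ∀ p ∈ A, p.2 ≠ (⟨n - 1, by omega⟩ : Fin n))
    (hScol : ∀ p ∈ Sn, p.2 = (⟨n - 1, by omega⟩ : Fin n))
    (hTcol : ∀ p ∈ Tn1, p.2 = (⟨n - 2, by omega⟩ : Fin n))
    (hAprev : ∀ p ∈ A, p.2 = (⟨n - 2, by omega⟩ : Fin n) → p ∈ Tn1) :
    ∀ {a b : ((A ∪ Sn : Finset (Fin m × Fin n)) : Set (Fin m × Fin n))}
      (p : (((⊤ : SimpleGraph (Fin m)) □ pathGraph n).induce
        ((A ∪ Sn : Finset (Fin m × Fin n)) : Set (Fin m × Fin n))).Walk a b)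
      (hb : (b : Fin m × Fin n) ∈ A),
      (∀ ha : (a : Fin m × Fin n) ∈ A,
        ((((⊤ : SimpleGraph (Fin m)) □ pathGraph n)).induce (A : Set (Fin m × Fin n))).Reachable
          ⟨a, ha⟩ ⟨b, hb⟩) ∧
      ((a : Fin m × Fin n).2 = (⟨n - 1, by omega⟩ : Fin n) →
        ∃ (c : Fin m × Fin n) (hc : c ∈ Tn1) (hcA : c ∈ A),
          ((((⊤ : SimpleGraph (Fin m)) □ pathGraph n)).induce (A : Set (Fin m × Fin n))).Reachable
            ⟨c, hcA⟩ ⟨b, hb⟩) := by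
  intro a b p
  induction p with
  | nil =>
    intro hb
    refine ⟨fun ha => Reachable.refl _, fun ha2 => absurd ha2 (hA _ hb)⟩
  | @cons a z b h q ih =>
    intro hb
    obtain ⟨ih1, ih2⟩ := ih hb
    have hzP : (z : Fin m × Fin n) ∈ A ∪ Sn := z.2
    have haP : (a : Fin m × Fin n) ∈ A ∪ Sn := a.2
    have hKadj : ((⊤ : SimpleGraph (Fin m)) □ pathGraph n).Adj a z := h
    constructor
    · intro ha
      have ha2 : (a : Fin m × Fin n).2 ≠ (⟨n - 1, by omega⟩ : Fin n) := hA _ ha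
      by_cases hz2 : (z : Fin m × Fin n).2 = (⟨n - 1, by omega⟩ : Fin n)
      · -- a is vertically below z which is in the last column
        have hav : (a : Fin m × Fin n) = ((z : Fin m × Fin n).1, (⟨n - 2, by omega⟩ : Fin n)) :=
          adj_last_cases hn hz2 ha2 hKadj.symm
        have haT : (a : Fin m × Fin n) ∈ Tn1 := hAprev _ ha (by rw [hav])
        obtain ⟨c, hc, hcA, hr⟩ := ih2 hz2
        by_cases hac : (a : Fin m × Fin n) = c
        · subst hac; exact hr
        · have hcc : c.2 = (⟨n - 2, by omega⟩ : Fin n) := hTcol _ hc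
          have hadj2 : (((⊤ : SimpleGraph (Fin m)) □ pathGraph n)).induce
              (A : Set (Fin m × Fin n)) |>.Adj ⟨a, ha⟩ ⟨c, hcA⟩ :=
            K_adj_of_same_col hac (by show (a : Fin m × Fin n).2 = c.2; rw [hcc, hav])
          exact hadj2.reachable.trans hr
      · have hzA : (z : Fin m × Fin n) ∈ A := by
          rcases Finset.mem_union.1 hzP with h' | h'
          · exact h'
          · exact absurd (hScol _ h') hz2
        have hadj2 : (((⊤ : SimpleGraph (Fin m)) □ pathGraph n)).induce
            (A : Set (Fin m × Fin n)) |>.Adj ⟨a, ha⟩ ⟨z, hzA⟩ := hKadj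
        exact hadj2.reachable.trans (ih1 hzA)
    · intro ha2
      by_cases hz2 : (z : Fin m × Fin n).2 = (⟨n - 1, by omega⟩ : Fin n)
      · exact ih2 hz2
      · have hzA : (z : Fin m × Fin n) ∈ A := by
          rcases Finset.mem_union.1 hzP with h' | h'
          · exact h'
          · exact absurd (hScol _ h') hz2
        have hzv : (z : Fin m × Fin n) = ((a : Fin m × Fin n).1, (⟨n - 2, by omega⟩ : Fin n)) :=
          adj_last_cases hn ha2 hz2 hKadj
        have hzT : (z : Fin m × Fin n) ∈ Tn1 := hAprev _ hzA (by rw [hzv])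
        exact ⟨z, hzT, hzA, ih1 hzA⟩


lemma claimCyc (hn : 3 ≤ n) (A Sn Tn1 : Finset (Fin m × Fin n))
    (hA : ∀ p ∈ A, p.2 ≠ (⟨n - 1, by omega⟩ : Fin n))
    (hScol : ∀ p ∈ Sn, p.2 = (⟨n - 1, by omega⟩ : Fin n))
    (hTcol : ∀ p ∈ Tn1, p.2 = (⟨n - 2, by omega⟩ : Fin n))
    (hAprev : ∀ p ∈ A, p.2 = (⟨n - 2, by omega⟩ : Fin n) → p ∈ Tn1)
    (hTsub : Tn1 ⊆ A)
    (hcomp : ∀ R, IsCompOf (cycleRow m □ pathGraph n) R Sn →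
      ¬ IsCompOf (cycleRow m □ pathGraph n) R (Sn ∪ Tn1))
    (hk : kcomp (cycleRow m □ pathGraph n) (Sn ∪ Tn1) =
      kcomp (cycleRow m □ pathGraph n) Tn1) :
    ∀ {a b : ((A ∪ Sn : Finset (Fin m × Fin n)) : Set (Fin m × Fin n))}
      (p : ((cycleRow m □ pathGraph n).induce
        ((A ∪ Sn : Finset (Fin m × Fin n)) : Set (Fin m × Fin n))).Walk a b)
      (hb : (b : Fin m × Fin n) ∈ A),
      (∀ ha : (a : Fin m × Fin n) ∈ A,
        ((cycleRow m □ pathGraph n).induce (A : Set (Fin m × Fin n))).Reachable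
          ⟨a, ha⟩ ⟨b, hb⟩) ∧
      (∀ haS : (a : Fin m × Fin n) ∈ Sn,
        ∃ (c : Fin m × Fin n) (hc : c ∈ Tn1) (hcA : c ∈ A),
          ((cycleRow m □ pathGraph n).induce
            ((Sn ∪ Tn1 : Finset (Fin m × Fin n)) : Set (Fin m × Fin n))).Reachable
            ⟨a, Finset.mem_coe.mpr (Finset.mem_union_left _ haS)⟩
            ⟨c, Finset.mem_coe.mpr (Finset.mem_union_right _ hc)⟩ ∧
          ((cycleRow m □ pathGraph n).induce (A : Set (Fin m × Fin n))).Reachable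
            ⟨c, hcA⟩ ⟨b, hb⟩) := by
  intro a b p
  induction p with
  | nil =>
    intro hb
    refine ⟨fun ha => Reachable.refl _, fun haS => absurd (hScol _ haS) (hA _ hb)⟩
  | @cons a z b h q ih =>
    intro hb
    obtain ⟨ih1, ih2⟩ := ih hb
    have hzP : (z : Fin m × Fin n) ∈ A ∪ Sn := z.2
    have haP : (a : Fin m × Fin n) ∈ A ∪ Sn := a.2
    have hCadj : (cycleRow m □ pathGraph n).Adj a z := h
    have memA_of_ne : ∀ (w : ((A ∪ Sn : Finset (Fin m × Fin n)) : Set (Fin m × Fin n))),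
        (w : Fin m × Fin n).2 ≠ (⟨n - 1, by omega⟩ : Fin n) → (w : Fin m × Fin n) ∈ A := by
      intro w hw
      rcases Finset.mem_union.1 w.2 with h' | h'
      · exact h'
      · exact absurd (hScol _ h') hw
    have memS_of_eq : ∀ (w : ((A ∪ Sn : Finset (Fin m × Fin n)) : Set (Fin m × Fin n))),
        (w : Fin m × Fin n).2 = (⟨n - 1, by omega⟩ : Fin n) → (w : Fin m × Fin n) ∈ Sn := by
      intro w hw
      rcases Finset.mem_union.1 w.2 with h' | h'
      · exact absurd hw (hA _ h')
      · exact h'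
    constructor
    · intro ha
      have ha2 : (a : Fin m × Fin n).2 ≠ (⟨n - 1, by omega⟩ : Fin n) := hA _ ha
      by_cases hz2 : (z : Fin m × Fin n).2 = (⟨n - 1, by omega⟩ : Fin n)
      · -- a ∈ Tn1, z ∈ Sn (vertical step into the last column)
        have hzS : (z : Fin m × Fin n) ∈ Sn := memS_of_eq z hz2
        have hav : (a : Fin m × Fin n) = ((z : Fin m × Fin n).1, (⟨n - 2, by omega⟩ : Fin n)) :=
          adj_last_cases hn hz2 ha2 hCadj.symm
        have haT : (a : Fin m × Fin n) ∈ Tn1 := hAprev _ ha (by rw [hav])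
        obtain ⟨c, hc, hcA, hru, hrA⟩ := ih2 hzS
        -- a is adjacent to z inside Sn ∪ Tn1
        have hadjU : ((cycleRow m □ pathGraph n).induce
            ((Sn ∪ Tn1 : Finset (Fin m × Fin n)) : Set (Fin m × Fin n))).Adj
            ⟨a, Finset.mem_coe.mpr (Finset.mem_union_right _ haT)⟩
            ⟨z, Finset.mem_coe.mpr (Finset.mem_union_left _ hzS)⟩ := hCadj
        have hrac : ((cycleRow m □ pathGraph n).induce
            ((Sn ∪ Tn1 : Finset (Fin m × Fin n)) : Set (Fin m × Fin n))).Reachable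
            ⟨a, Finset.mem_coe.mpr (Finset.mem_union_right _ haT)⟩
            ⟨c, Finset.mem_coe.mpr (Finset.mem_union_right _ hc)⟩ :=
          hadjU.reachable.trans hru
        have hrT := t_reach hn Sn Tn1 hScol hTcol hcomp hk haT hc hrac
        have hrT' := reach_mono (cycleRow m □ pathGraph n)
          (by exact_mod_cast Finset.coe_subset.mpr hTsub) haT hc hrT
        exact (hrT'.trans hrA)
      · have hzA : (z : Fin m × Fin n) ∈ A := memA_of_ne z hz2
        have hadj2 : ((cycleRow m □ pathGraph n).induce (A : Set (Fin m × Fin n))).Adj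
            ⟨a, ha⟩ ⟨z, hzA⟩ := hCadj
        exact hadj2.reachable.trans (ih1 hzA)
    · intro haS
      by_cases hz2 : (z : Fin m × Fin n).2 = (⟨n - 1, by omega⟩ : Fin n)
      · have hzS : (z : Fin m × Fin n) ∈ Sn := memS_of_eq z hz2
        obtain ⟨c, hc, hcA, hru, hrA⟩ := ih2 hzS
        have hadjU : ((cycleRow m □ pathGraph n).induce
            ((Sn ∪ Tn1 : Finset (Fin m × Fin n)) : Set (Fin m × Fin n))).Adj
            ⟨a, Finset.mem_coe.mpr (Finset.mem_union_left _ haS)⟩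
            ⟨z, Finset.mem_coe.mpr (Finset.mem_union_left _ hzS)⟩ := hCadj
        exact ⟨c, hc, hcA, hadjU.reachable.trans hru, hrA⟩
      · have hzA : (z : Fin m × Fin n) ∈ A := memA_of_ne z hz2
        have hzv : (z : Fin m × Fin n) = ((a : Fin m × Fin n).1, (⟨n - 2, by omega⟩ : Fin n)) :=
          adj_last_cases hn (hScol _ haS) hz2 hCadj
        have hzT : (z : Fin m × Fin n) ∈ Tn1 := hAprev _ hzA (by rw [hzv])
        have hadjU : ((cycleRow m □ pathGraph n).induce
            ((Sn ∪ Tn1 : Finset (Fin m × Fin n)) : Set (Fin m × Fin n))).Adj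
            ⟨a, Finset.mem_coe.mpr (Finset.mem_union_left _ haS)⟩
            ⟨z, Finset.mem_coe.mpr (Finset.mem_union_right _ hzT)⟩ := hCadj
        exact ⟨z, hzT, hzA, hadjU.reachable, ih1 hzA⟩


lemma back_conn (hn : 3 ≤ n) (A Sn Tn1 : Finset (Fin m × Fin n))
    {Gg : SimpleGraph (Fin m × Fin n)} (hle : (cycleRow m □ pathGraph n) ≤ Gg)
    (hScol : ∀ p ∈ Sn, p.2 = (⟨n - 1, by omega⟩ : Fin n))
    (hTcol : ∀ p ∈ Tn1, p.2 = (⟨n - 2, by omega⟩ : Fin n))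
    (hcomp : ∀ R, IsCompOf (cycleRow m □ pathGraph n) R Sn →
      ¬ IsCompOf (cycleRow m □ pathGraph n) R (Sn ∪ Tn1))
    (hTsub : Tn1 ⊆ A) (hTne : Tn1.Nonempty)
    (hconnA : (Gg.induce (A : Set (Fin m × Fin n))).Connected) :
    (Gg.induce ((A ∪ Sn : Finset (Fin m × Fin n)) : Set (Fin m × Fin n))).Connected := by
  obtain ⟨t0, hT0⟩ := hTne
  have htA : t0 ∈ A := hTsub hT0
  have hAsub : A ⊆ A ∪ Sn := Finset.subset_union_left
  have hSsub : Sn ⊆ A ∪ Sn := Finset.subset_union_right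
  have key : ∀ w (hw : w ∈ A ∪ Sn),
      (Gg.induce ((A ∪ Sn : Finset (Fin m × Fin n)) : Set (Fin m × Fin n))).Reachable
        ⟨w, hw⟩ ⟨t0, hAsub htA⟩ := by
    intro w hw
    rcases Finset.mem_union.1 hw with hwA | hwS
    · have := hconnA.preconnected ⟨w, hwA⟩ ⟨t0, htA⟩
      exact reach_mono Gg (by exact_mod_cast Finset.coe_subset.mpr hAsub) hwA htA this
    · obtain ⟨i, hi, hreach, hiT⟩ := exists_anchor hn Sn Tn1 hScol hTcol hcomp hwS
      have h1 : (Gg.induce (Sn : Set (Fin m × Fin n))).Reachable ⟨w, hwS⟩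
          ⟨(i, ⟨n - 1, by omega⟩), hi⟩ := reach_le hle hreach
      have h2 := reach_mono Gg (by exact_mod_cast Finset.coe_subset.mpr hSsub) hwS hi h1
      have hadj : (Gg.induce ((A ∪ Sn : Finset (Fin m × Fin n)) : Set (Fin m × Fin n))).Adj
          ⟨(i, ⟨n - 1, by omega⟩), hSsub hi⟩ ⟨(i, ⟨n - 2, by omega⟩), hAsub (hTsub hiT)⟩ :=
        hle (vert_adj (cycleRow m) (path_adj_last_prev hn))
      have h3 := hconnA.preconnected ⟨(i, ⟨n - 2, by omega⟩), hTsub hiT⟩ ⟨t0, htA⟩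
      have h4 := reach_mono Gg (by exact_mod_cast Finset.coe_subset.mpr hAsub) (hTsub hiT) htA h3
      exact (h2.trans hadj.reachable).trans h4
  haveI : Nonempty ((A ∪ Sn : Finset (Fin m × Fin n)) : Set (Fin m × Fin n)) :=
    ⟨⟨t0, hAsub htA⟩⟩
  refine ⟨?_⟩
  rintro ⟨x, hx⟩ ⟨y, hy⟩
  exact (key x hx).trans (key y hy).symm


lemma fwd_connK (hn : 3 ≤ n) (A Sn Tn1 : Finset (Fin m × Fin n))
    (hA : ∀ p ∈ A, p.2 ≠ (⟨n - 1, by omega⟩ : Fin n))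
    (hScol : ∀ p ∈ Sn, p.2 = (⟨n - 1, by omega⟩ : Fin n))
    (hTcol : ∀ p ∈ Tn1, p.2 = (⟨n - 2, by omega⟩ : Fin n))
    (hAprev : ∀ p ∈ A, p.2 = (⟨n - 2, by omega⟩ : Fin n) → p ∈ Tn1)
    (hAne : A.Nonempty)
    (hconn : (((⊤ : SimpleGraph (Fin m)) □ pathGraph n).induce
      ((A ∪ Sn : Finset (Fin m × Fin n)) : Set (Fin m × Fin n))).Connected) :
    (((⊤ : SimpleGraph (Fin m)) □ pathGraph n).induce (A : Set (Fin m × Fin n))).Connected := by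
  haveI : Nonempty (A : Set (Fin m × Fin n)) := ⟨⟨hAne.choose, hAne.choose_spec⟩⟩
  refine ⟨?_⟩
  rintro ⟨x, hx⟩ ⟨y, hy⟩
  have hxP : x ∈ A ∪ Sn := Finset.mem_union_left _ hx
  have hyP : y ∈ A ∪ Sn := Finset.mem_union_left _ hy
  obtain ⟨p⟩ := hconn.preconnected ⟨x, hxP⟩ ⟨y, hyP⟩
  exact (claimK hn A Sn Tn1 hA hScol hTcol hAprev p hy).1 hx

lemma fwd_connCyc (hn : 3 ≤ n) (A Sn Tn1 : Finset (Fin m × Fin n))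
    (hA : ∀ p ∈ A, p.2 ≠ (⟨n - 1, by omega⟩ : Fin n))
    (hScol : ∀ p ∈ Sn, p.2 = (⟨n - 1, by omega⟩ : Fin n))
    (hTcol : ∀ p ∈ Tn1, p.2 = (⟨n - 2, by omega⟩ : Fin n))
    (hAprev : ∀ p ∈ A, p.2 = (⟨n - 2, by omega⟩ : Fin n) → p ∈ Tn1)
    (hTsub : Tn1 ⊆ A)
    (hcomp : ∀ R, IsCompOf (cycleRow m □ pathGraph n) R Sn →
      ¬ IsCompOf (cycleRow m □ pathGraph n) R (Sn ∪ Tn1))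
    (hk : kcomp (cycleRow m □ pathGraph n) (Sn ∪ Tn1) =
      kcomp (cycleRow m □ pathGraph n) Tn1)
    (hAne : A.Nonempty)
    (hconn : ((cycleRow m □ pathGraph n).induce
      ((A ∪ Sn : Finset (Fin m × Fin n)) : Set (Fin m × Fin n))).Connected) :
    ((cycleRow m □ pathGraph n).induce (A : Set (Fin m × Fin n))).Connected := by
  haveI : Nonempty (A : Set (Fin m × Fin n)) := ⟨⟨hAne.choose, hAne.choose_spec⟩⟩
  refine ⟨?_⟩
  rintro ⟨x, hx⟩ ⟨y, hy⟩
  have hxP : x ∈ A ∪ Sn := Finset.mem_union_left _ hx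
  have hyP : y ∈ A ∪ Sn := Finset.mem_union_left _ hy
  obtain ⟨p⟩ := hconn.preconnected ⟨x, hxP⟩ ⟨y, hyP⟩
  exact (claimCyc hn A Sn Tn1 hA hScol hTcol hAprev hTsub hcomp hk p hy).1 hx

end ST


/-- Let `m ≥ 3`, `n ≥ 3` and `C ∈ C'_{m,n}` with `C∩I_n = S_n` and
`C∩I_{n−1} = T_{n−1}`. If no connected component of `(C_m×P_n)[S_n]` is a connected
component of `(C_m×P_n)[S_n ∪ T_{n−1}]`, and `(C_m×P_n)[S_n ∪ T_{n−1}]` has the same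
number of connected components as `(C_m×P_n)[T_{n−1}]`, then
`N'(K_m×P_n; S_n∪T_{n−1}) = N'(K_m×P_{n−1}; T_{n−1})`. -/
theorem statement14 (m n : ℕ) (hm : 3 ≤ m) (hn : 3 ≤ n)
    (C : Finset (Fin m × Fin n)) (hC : C ∈ Cmn' m n)
    (Sn Tn1 : Finset (Fin m × Fin n))
    (hSn : Sn = C.filter (fun p => p.2 = (⟨n - 1, by omega⟩ : Fin n)))
    (hTn1 : Tn1 = C.filter (fun p => p.2 = (⟨n - 2, by omega⟩ : Fin n)))
    (hcomp : ∀ R, IsCompOf (cycleRow m □ pathGraph n) R Sn →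
      ¬ IsCompOf (cycleRow m □ pathGraph n) R (Sn ∪ Tn1))
    (hk : kcomp (cycleRow m □ pathGraph n) (Sn ∪ Tn1) =
      kcomp (cycleRow m □ pathGraph n) Tn1) :
    N' m n (Sn ∪ Tn1) =
      N' m (n - 1)
        ((Tn1.image Prod.fst).image (fun q => (q, (⟨n - 2, by omega⟩ : Fin (n - 1))))) := by
  have main : ∀ h2 : n - 2 < n - 1, N' m n (Sn ∪ Tn1) =
      N' m (n - 1) ((Tn1.image Prod.fst).image
        (fun q => (q, (⟨n - 2, h2⟩ : Fin (n - 1))))) := by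
    intro h2
    obtain ⟨hCconn, hCnc, hCcols⟩ := hC
    set lastn : Fin n := ⟨n - 1, by omega⟩ with hlastn
    set prevn : Fin n := ⟨n - 2, by omega⟩ with hprevn
    set lastB : Fin (n - 1) := ⟨n - 2, h2⟩ with hlastBdef
    set emb := colEmb m n with hembdef
    set X' : Finset (Fin m × Fin (n - 1)) :=
      (Tn1.image Prod.fst).image (fun q => (q, lastB)) with hX'def
    -- basic column facts
    have hScol : ∀ p ∈ Sn, p.2 = lastn := by
      intro p hp; rw [hSn, Finset.mem_filter] at hp; exact hp.2
    have hTcol : ∀ p ∈ Tn1, p.2 = prevn := by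
      intro p hp; rw [hTn1, Finset.mem_filter] at hp; exact hp.2
    have hSne : Sn.Nonempty := by rw [hSn]; exact hCcols lastn
    have hTne : Tn1.Nonempty := by rw [hTn1]; exact hCcols prevn
    have hlp : prevn ≠ lastn := by
      intro h; rw [Fin.ext_iff] at h; simp only [hprevn, hlastn] at h; omega
    have hX'col : ∀ p ∈ X', p.2 = lastB := by
      intro p hp
      rw [hX'def] at hp
      simp only [Finset.mem_image, exists_exists_and_eq_and] at hp
      obtain ⟨t, _, rfl⟩ := hp
      rfl
    have hX'ne : X'.Nonempty := (hTne.image _).image _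
    have hXval : X'.map emb = Tn1 := by
      rw [hX'def, Finset.map_eq_image, Finset.image_image]
      have hco : (⇑emb ∘ fun q : Fin m => (q, lastB)) = (fun q : Fin m => (q, prevn)) := by
        funext q
        exact Prod.ext rfl (Fin.ext rfl)
      rw [hco]
      exact image_col_eq hTcol
    -- the map
    set Ψ : Finset (Fin m × Fin (n - 1)) → Finset (Fin m × Fin n) :=
      fun B => B.map emb ∪ Sn with hΨdef
    -- filters of Ψ B
    have hfSn_last : Sn.filter (fun p => p.2 = lastn) = Sn :=
      Finset.filter_true_of_mem hScol
    have hfSn_o : ∀ j : Fin n, j ≠ lastn → Sn.filter (fun p => p.2 = j) = ∅ := by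
      intro j hj
      rw [Finset.filter_eq_empty_iff]
      intro p hp h
      exact hj (h ▸ hScol p hp)
    have hfTn_prev : Tn1.filter (fun p => p.2 = prevn) = Tn1 :=
      Finset.filter_true_of_mem hTcol
    have hfTn_o : ∀ j : Fin n, j ≠ prevn → Tn1.filter (fun p => p.2 = j) = ∅ := by
      intro j hj
      rw [Finset.filter_eq_empty_iff]
      intro p hp h
      exact hj (h ▸ hTcol p hp)
    have hXf_last : (Sn ∪ Tn1).filter (fun p => p.2 = lastn) = Sn := by
      rw [Finset.filter_union, hfSn_last, hfTn_o lastn (Ne.symm hlp), Finset.union_empty]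
    have hXf_prev : (Sn ∪ Tn1).filter (fun p => p.2 = prevn) = Tn1 := by
      rw [Finset.filter_union, hfSn_o prevn hlp, hfTn_prev, Finset.empty_union]
    have hXf_o : ∀ j : Fin n, j ≠ lastn → j ≠ prevn →
        (Sn ∪ Tn1).filter (fun p => p.2 = j) = ∅ := by
      intro j hj1 hj2
      rw [Finset.filter_union, hfSn_o j hj1, hfTn_o j hj2, Finset.union_empty]
    have hX'f_last : X'.filter (fun p => p.2 = lastB) = X' :=
      Finset.filter_true_of_mem hX'col
    have hX'f_o : ∀ j : Fin (n - 1), j ≠ lastB → X'.filter (fun p => p.2 = j) = ∅ := by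
      intro j hj
      rw [Finset.filter_eq_empty_iff]
      intro p hp h
      exact hj (h ▸ hX'col p hp)
    have hfΨ_last : ∀ B, (Ψ B).filter (fun p => p.2 = lastn) = Sn := by
      intro B
      rw [hΨdef]
      simp only
      rw [Finset.filter_union, hfSn_last, filter_map_last hn, Finset.empty_union]
    have hfΨ_low : ∀ B (j : Fin n) (hj : (j : ℕ) < n - 1),
        (Ψ B).filter (fun p => p.2 = j) =
          (B.filter (fun q => q.2 = (⟨(j : ℕ), hj⟩ : Fin (n - 1)))).map emb := by
      intro B j hj
      rw [hΨdef]
      simp only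
      rw [Finset.filter_union, filter_map_col j hj,
        hfSn_o j (by intro h; rw [h, hlastn] at hj; simp at hj), Finset.union_empty]
    have hprev_lt : ((prevn : Fin n) : ℕ) < n - 1 := by rw [hprevn]; simp; omega
    have hprev_pre : (⟨((prevn : Fin n) : ℕ), hprev_lt⟩ : Fin (n - 1)) = lastB :=
      Fin.ext rfl
    have hfΨ_prev : ∀ B, (Ψ B).filter (fun p => p.2 = prevn) =
        (B.filter (fun q => q.2 = lastB)).map emb := by
      intro B
      rw [hfΨ_low B prevn hprev_lt, hprev_pre]
    -- injectivity of Ψ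
    have hmapΨ : ∀ B, (Ψ B).filter (fun p => p.2 ≠ lastn) = B.map emb := by
      intro B
      rw [hΨdef]
      simp only
      rw [Finset.filter_union]
      have e1 : (B.map emb).filter (fun p => p.2 ≠ lastn) = B.map emb := by
        refine Finset.filter_true_of_mem ?_
        intro p hp h
        have := mem_map_snd_lt hp
        rw [h, hlastn] at this
        simp at this
      have e2 : Sn.filter (fun p => p.2 ≠ lastn) = ∅ := by
        rw [Finset.filter_eq_empty_iff]
        intro p hp h
        exact h (hScol p hp)
      rw [e1, e2, Finset.union_empty]
    have hΨinj : Function.Injective Ψ := by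
      intro B1 B2 h
      have : B1.map emb = B2.map emb := by rw [← hmapΨ B1, ← hmapΨ B2, h]
      exact Finset.map_injective emb this
    -- column-condition equivalences
    have colEquiv1 : ∀ B : Finset (Fin m × Fin (n - 1)),
        ((∀ j : Fin (n - 1), (X'.filter (fun p => p.2 = j)).Nonempty →
          B.filter (fun p => p.2 = j) = X'.filter (fun p => p.2 = j)) ↔
        B.filter (fun p => p.2 = lastB) = X') := by
      intro B
      constructor
      · intro h
        have := h lastB (by rw [hX'f_last]; exact hX'ne)
        rwa [hX'f_last] at this
      · intro h j hj
        by_cases hjl : j = lastB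
        · subst hjl; rw [hX'f_last]; exact h
        · rw [hX'f_o j hjl] at hj; exact absurd hj (by simp)
    have colEquiv2 : ∀ B : Finset (Fin m × Fin (n - 1)),
        ((∀ j : Fin n, ((Sn ∪ Tn1).filter (fun p => p.2 = j)).Nonempty →
          (Ψ B).filter (fun p => p.2 = j) = (Sn ∪ Tn1).filter (fun p => p.2 = j)) ↔
        B.filter (fun p => p.2 = lastB) = X') := by
      intro B
      constructor
      · intro h
        have h1 := h prevn (by rw [hXf_prev]; exact hTne)
        rw [hXf_prev, hfΨ_prev] at h1
        apply Finset.map_injective emb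
        rw [hXval, h1]
      · intro h j hj
        by_cases hjl : j = lastn
        · subst hjl; rw [hXf_last, hfΨ_last]
        · by_cases hjp : j = prevn
          · subst hjp
            rw [hXf_prev, hfΨ_prev, h, hXval]
          · rw [hXf_o j hjl hjp] at hj; exact absurd hj (by simp)
    -- main equivalence of Cmn' membership, given column condition
    have hle : (cycleRow m □ pathGraph n) ≤ ((⊤ : SimpleGraph (Fin m)) □ pathGraph n) := by
      intro x y h
      rw [boxProd_adj] at h ⊢
      rcases h with ⟨h1, h2⟩ | ⟨h1, h2⟩
      · exact Or.inl ⟨by simp [h1.ne], h2⟩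
      · exact Or.inr ⟨h1, h2⟩
    have cmnEquiv : ∀ B : Finset (Fin m × Fin (n - 1)),
        B.filter (fun p => p.2 = lastB) = X' →
        (B ∈ Cmn' m (n - 1) ↔ Ψ B ∈ Cmn' m n) := by
      intro B hcolB
      have hAT : (B.map emb).filter (fun p => p.2 = prevn) = Tn1 := by
        have := hfΨ_prev B
        rw [hΨdef] at this
        simp only at this
        rw [Finset.filter_union, hfSn_o prevn hlp, Finset.union_empty] at this
        rw [this, hcolB, hXval]
      have hA : ∀ p ∈ B.map emb, p.2 ≠ lastn := by
        intro p hp h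
        have := mem_map_snd_lt hp
        rw [h, hlastn] at this
        simp at this
      have hTsub : Tn1 ⊆ B.map emb := by
        rw [← hAT]; exact Finset.filter_subset _ _
      have hAprev : ∀ p ∈ B.map emb, p.2 = prevn → p ∈ Tn1 := by
        intro p hp hcol
        rw [← hAT]; exact Finset.mem_filter.2 ⟨hp, hcol⟩
      have hBne : B.Nonempty := by
        obtain ⟨x, hx⟩ := hX'ne
        rw [← hcolB] at hx
        exact ⟨x, (Finset.mem_filter.1 hx).1⟩
      have hAne : (B.map emb).Nonempty := by
        obtain ⟨x, hx⟩ := hBne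
        exact ⟨emb x, Finset.mem_map_of_mem _ hx⟩
      have hΨne : (Ψ B).Nonempty := by
        obtain ⟨s, hs⟩ := hSne
        exact ⟨s, Finset.mem_union_right _ hs⟩
      constructor
      · rintro ⟨⟨hBne', hBconn⟩, hBnc, hBcols⟩
        refine ⟨⟨hΨne, ?_⟩, ?_, ?_⟩
        · have hAconn := (conn_cast ⊤ B).1 hBconn
          exact back_conn hn (B.map emb) Sn Tn1 hle hScol hTcol hcomp hTsub hTne hAconn
        · intro hcontr
          apply hBnc
          refine ⟨hBne', ?_⟩
          have hAconn := fwd_connCyc hn (B.map emb) Sn Tn1 hA hScol hTcol hAprev hTsub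
            hcomp hk hAne hcontr.2
          exact (conn_cast (cycleRow m) B).2 hAconn
        · intro j
          by_cases hjl : j = lastn
          · subst hjl; rw [hfΨ_last]; exact hSne
          · have hjlt : (j : ℕ) < n - 1 := by
              have := j.2
              have : (j : ℕ) ≠ n - 1 := by
                intro h; exact hjl (Fin.ext (by rw [h, hlastn]))
              omega
            obtain ⟨x, hx⟩ := hBcols ⟨(j : ℕ), hjlt⟩
            exact ⟨emb x, by rw [hfΨ_low B j hjlt]; exact Finset.mem_map_of_mem _ hx⟩
      · rintro ⟨⟨_, hΨconn⟩, hΨnc, hΨcols⟩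
        refine ⟨⟨hBne, ?_⟩, ?_, ?_⟩
        · have hAconn := fwd_connK hn (B.map emb) Sn Tn1 hA hScol hTcol hAprev hAne hΨconn
          exact (conn_cast ⊤ B).2 hAconn
        · intro hcontr
          apply hΨnc
          refine ⟨hΨne, ?_⟩
          have hAconn := (conn_cast (cycleRow m) B).1 hcontr.2
          exact back_conn hn (B.map emb) Sn Tn1 (le_refl _) hScol hTcol hcomp hTsub hTne hAconn
        · intro j
          have hjn : (j : ℕ) < n := lt_of_lt_of_le j.2 (Nat.sub_le n 1)
          obtain ⟨y, hy⟩ := hΨcols ⟨(j : ℕ), hjn⟩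
          have hjlt : ((⟨(j : ℕ), hjn⟩ : Fin n) : ℕ) < n - 1 := j.2
          rw [hfΨ_low B ⟨(j : ℕ), hjn⟩ hjlt] at hy
          obtain ⟨x, hx, rfl⟩ := Finset.mem_map.1 hy
          obtain ⟨hxB, hxcol⟩ := Finset.mem_filter.1 hx
          exact ⟨x, Finset.mem_filter.2 ⟨hxB, hxcol.trans (Fin.ext rfl)⟩⟩
    -- full equivalence
    have key : ∀ B : Finset (Fin m × Fin (n - 1)),
        (B ∈ Cmn' m (n - 1) ∧ ∀ j : Fin (n - 1), (X'.filter (fun p => p.2 = j)).Nonempty →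
          B.filter (fun p => p.2 = j) = X'.filter (fun p => p.2 = j)) ↔
        (Ψ B ∈ Cmn' m n ∧ ∀ j : Fin n, ((Sn ∪ Tn1).filter (fun p => p.2 = j)).Nonempty →
          (Ψ B).filter (fun p => p.2 = j) = (Sn ∪ Tn1).filter (fun p => p.2 = j)) := by
      intro B
      constructor
      · rintro ⟨h1, h2⟩
        have hcolB := (colEquiv1 B).1 h2
        exact ⟨(cmnEquiv B hcolB).1 h1, (colEquiv2 B).2 hcolB⟩
      · rintro ⟨h1, h2⟩
        have hcolB := (colEquiv2 B).1 h2
        exact ⟨(cmnEquiv B hcolB).2 h1, (colEquiv1 B).2 hcolB⟩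
    have himage : {C' : Finset (Fin m × Fin n) | C' ∈ Cmn' m n ∧ ∀ j : Fin n,
          ((Sn ∪ Tn1).filter (fun p => p.2 = j)).Nonempty →
          C'.filter (fun p => p.2 = j) = (Sn ∪ Tn1).filter (fun p => p.2 = j)} =
        Ψ '' {B : Finset (Fin m × Fin (n - 1)) | B ∈ Cmn' m (n - 1) ∧ ∀ j : Fin (n - 1),
          (X'.filter (fun p => p.2 = j)).Nonempty →
          B.filter (fun p => p.2 = j) = X'.filter (fun p => p.2 = j)} := by
      ext C'
      simp only [Set.mem_image, Set.mem_setOf_eq]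
      constructor
      · rintro ⟨h1, h2⟩
        set D := C'.filter (fun p => ¬ p.2 = lastn) with hDdef
        set B := D.image
          (fun p => (p.1, (⟨min (p.2 : ℕ) (n - 2), by omega⟩ : Fin (n - 1)))) with hBdef
        have hDlow : ∀ p ∈ D, (p.2 : ℕ) < n - 1 := by
          intro p hp
          obtain ⟨_, hp2⟩ := Finset.mem_filter.1 hp
          have h3 := p.2.2
          have h4 : (p.2 : ℕ) ≠ n - 1 := fun h => hp2 (Fin.ext (by rw [h, hlastn]))
          omega
        have hmapB : B.map emb = D := by
          rw [hBdef, Finset.map_eq_image, Finset.image_image]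
          have heq : ∀ p ∈ D,
              (⇑emb ∘ fun p : Fin m × Fin n =>
                (p.1, (⟨min (p.2 : ℕ) (n - 2), by omega⟩ : Fin (n - 1)))) p = id p := by
            intro p hp
            have hlt := hDlow p hp
            have hmin : min ((p.2 : ℕ)) (n - 2) = (p.2 : ℕ) := by omega
            exact Prod.ext rfl (Fin.ext hmin)
          rw [Finset.image_congr heq, Finset.image_id]
        have hfC_last : C'.filter (fun p => p.2 = lastn) = Sn := by
          have h3 := h2 lastn (by rw [hXf_last]; exact hSne)
          rwa [hXf_last] at h3
        have hC'e : Ψ B = C' := by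
          rw [hΨdef]
          simp only
          rw [hmapB, hDdef, ← hfC_last, Finset.union_comm]
          exact Finset.filter_union_filter_not_eq _ C'
        rw [← hC'e] at h1 h2
        exact ⟨B, (key B).2 ⟨h1, h2⟩, hC'e⟩
      · rintro ⟨B, hB, rfl⟩
        exact (key B).1 hB
    unfold N'
    rw [himage, Set.ncard_image_of_injective _ hΨinj]
  exact main (by omega)
end
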